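/- Let d, m ≥ 1 and let h : Fin d → Fin m be a random hash function whose values h(k) are independent and uniformly distributed on Fin m, and let σ : Fin d → {−1, +1} be a random sign function whose values σ(k) are independent, uniform on {−1,+1}, and independent of h. For y, y' ∈ ℝ^d, the count-sketch inner-product estimator ⟨Sy, Sy'⟩ = Σ_{j=1}^{m} (Σ_{k} σ(k) y_k 𝟙[h(k)=j])(Σ_{k} σ(k) y'_k 𝟙[h(k)=j]) satisfies the variance bound Var(⟨Sy, Sy'⟩) ≤ (1/m) · ( ‖y‖₂² ‖y'‖₂² + ⟨y, y'⟩² ). -/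

import Mathlib

open Finset

/-- The random sign `σ(k) ∈ {−1,+1}` induced by a Boolean coin `s k`. -/
def sketchSign {d : ℕ} (s : Fin d → Bool) (k : Fin d) : ℝ :=
  if s k then 1 else -1

/-- `j`-th coordinate of the count-sketch `Sy`: `(Sy)_j = Σ_k σ(k) y_k 𝟙[h(k)=j]`. -/
def sketchCoord {d m : ℕ} (h : Fin d → Fin m) (s : Fin d → Bool)
    (y : Fin d → ℝ) (j : Fin m) : ℝ :=
  ∑ k, if h k = j then sketchSign s k * y k else 0

/-- The count-sketch inner-product estimator `⟨Sy, Sy'⟩` as a function of the sample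
point `ω = (h, σ)`. -/
def sketchEstimator {d m : ℕ} (ω : (Fin d → Fin m) × (Fin d → Bool))
    (y y' : Fin d → ℝ) : ℝ :=
  ∑ j, sketchCoord ω.1 ω.2 y j * sketchCoord ω.1 ω.2 y' j

/-- Expectation with respect to the uniform distribution on all (hash, sign) pairs;
under this distribution the values `h(k)` are independent and uniform on `Fin m`,
the signs `σ(k)` independent and uniform on `{±1}`, and `h` is independent of `σ`. -/
noncomputable def sketchExp {d m : ℕ}
    (f : ((Fin d → Fin m) × (Fin d → Bool)) → ℝ) : ℝ :=
  (∑ ω, f ω) / (Fintype.card ((Fin d → Fin m) × (Fin d → Bool)) : ℝ)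

lemma sum_sign_pow {d : ℕ} (e : Fin d → ℕ) :
    ∑ s : Fin d → Bool, ∏ i, (sketchSign s i) ^ (e i)
      = if ∀ i, Even (e i) then (2:ℝ)^d else 0 := by
  have h1 : ∑ s : Fin d → Bool, ∏ i, (sketchSign s i) ^ (e i)
      = ∏ i, ∑ b : Bool, ((if b then (1:ℝ) else -1)) ^ (e i) :=
    (Fintype.prod_sum (fun (i : Fin d) (b : Bool) => ((if b then (1:ℝ) else -1)) ^ (e i))).symm
  rw [h1]
  have h2 : ∀ i : Fin d, ∑ b : Bool, ((if b then (1:ℝ) else -1)) ^ (e i)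
      = 1 + (-1:ℝ)^(e i) := by
    intro i; rw [Fintype.sum_bool]; simp
  simp only [h2]
  split_ifs with h
  · have : ∀ i : Fin d, (1 + (-1:ℝ)^(e i)) = 2 := by
      intro i; rw [(h i).neg_one_pow]; norm_num
    simp [this]
  · push_neg at h
    obtain ⟨i, hi⟩ := h
    apply Finset.prod_eq_zero (Finset.mem_univ i)
    rw [(Nat.not_even_iff_odd.mp hi).neg_one_pow]
    ring


lemma prod_single_pow {d : ℕ} (f : Fin d → ℝ) (k : Fin d) :
    ∏ i, f i ^ (if i = k then 1 else 0) = f k := by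
  simp only [pow_ite, pow_one, pow_zero]
  simp [Finset.prod_ite_eq']


lemma sign_mul_eq_prod {d : ℕ} (s : Fin d → Bool) (k l k' l' : Fin d) :
    sketchSign s k * sketchSign s l * (sketchSign s k' * sketchSign s l')
      = ∏ i, (sketchSign s i) ^
          ((if i = k then 1 else 0) + (if i = l then 1 else 0)
            + ((if i = k' then 1 else 0) + (if i = l' then 1 else 0))) := by
  simp only [pow_add, Finset.prod_mul_distrib, prod_single_pow]


lemma sign4 {d : ℕ} {k l k' l' : Fin d} (hkl : k ≠ l) (hkl' : k' ≠ l') :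
    ∑ s : Fin d → Bool,
        sketchSign s k * sketchSign s l * (sketchSign s k' * sketchSign s l')
      = if (k = k' ∧ l = l') ∨ (k = l' ∧ l = k') then (2:ℝ)^d else 0 := by
  simp only [sign_mul_eq_prod]
  rw [sum_sign_pow]
  have hiff : (∀ i : Fin d, Even ((if i = k then 1 else 0) + (if i = l then 1 else 0)
      + ((if i = k' then 1 else 0) + (if i = l' then 1 else 0))))
      ↔ ((k = k' ∧ l = l') ∨ (k = l' ∧ l = k')) := by
    constructor
    · intro h
      have hk := h k
      have hl := h l
      by_cases h1 : k = k' <;> by_cases h2 : k = l' <;>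
        by_cases h3 : l = k' <;> by_cases h4 : l = l' <;>
        simp_all [Nat.even_iff, hkl, hkl', Ne.symm hkl] <;> omega
    · rintro (⟨rfl, rfl⟩ | ⟨rfl, rfl⟩) i
      · exact ⟨(if i = k then 1 else 0) + (if i = l then 1 else 0), by ring⟩
      · exact ⟨(if i = k then 1 else 0) + (if i = l then 1 else 0), by ring⟩
  rw [if_congr hiff rfl rfl]


lemma hash_sum {d m : ℕ} (hm : 1 ≤ m) {k l : Fin d} (hkl : k ≠ l) :
    ∑ h : Fin d → Fin m, (if h k = h l then (1:ℝ) else 0) = (m:ℝ)^(d-1) := by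
  haveI : NeZero m := ⟨by omega⟩
  have hd2 : 2 ≤ d := by
    have : 1 < Fintype.card (Fin d) := Fintype.one_lt_card_iff_nontrivial.mpr ⟨⟨k, l, hkl⟩⟩
    simp at this; omega
  have step1 : ∀ h : Fin d → Fin m, (if h k = h l then (1:ℝ) else 0)
      = ∑ j : Fin m, (if h k = j then (1:ℝ) else 0) * (if h l = j then 1 else 0) := by
    intro h
    simp only [ite_mul, one_mul, zero_mul]
    rw [Finset.sum_ite_eq]
    simp [eq_comm]
  simp only [step1]
  rw [Finset.sum_comm]
  have step2 : ∀ j : Fin m, ∑ h : Fin d → Fin m,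
      (if h k = j then (1:ℝ) else 0) * (if h l = j then 1 else 0) = (m:ℝ)^(d-2) := by
    intro j
    have key : ∀ h : Fin d → Fin m,
        (if h k = j then (1:ℝ) else 0) * (if h l = j then 1 else 0)
          = ∏ i, (if i = k then (if h i = j then (1:ℝ) else 0)
              else if i = l then (if h i = j then 1 else 0) else 1) := by
      intro h
      by_cases h1 : h k = j <;> by_cases h2 : h l = j
      · rw [if_pos h1, if_pos h2, one_mul]
        symm
        apply Finset.prod_eq_one
        intro i _
        split_ifs with e1 e2 <;> simp_all
      · rw [if_neg h2, mul_zero]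
        symm
        apply Finset.prod_eq_zero (Finset.mem_univ l)
        simp [Ne.symm hkl, h2]
      · rw [if_neg h1, zero_mul]
        symm
        apply Finset.prod_eq_zero (Finset.mem_univ k)
        simp [h1]
      · rw [if_neg h1, zero_mul]
        symm
        apply Finset.prod_eq_zero (Finset.mem_univ k)
        simp [h1]
    simp only [key]
    rw [(Fintype.prod_sum (fun (i : Fin d) (x : Fin m) =>
      (if i = k then (if x = j then (1:ℝ) else 0)
        else if i = l then (if x = j then 1 else 0) else 1))).symm]
    have inner : ∀ i : Fin d, (∑ x : Fin m, (if i = k then (if x = j then (1:ℝ) else 0)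
        else if i = l then (if x = j then 1 else 0) else 1))
          = if i = k then 1 else if i = l then 1 else (m:ℝ) := by
      intro i
      split_ifs with e1 e2 <;> simp
    simp only [inner]
    have hsub : ({k, l} : Finset (Fin d)) ⊆ Finset.univ := Finset.subset_univ _
    rw [← Finset.prod_subset (Finset.subset_univ (Finset.univ \ {k, l}))
      (by intro x _ hx
          simp only [Finset.mem_sdiff, Finset.mem_univ, true_and, not_not] at hx
          simp only [Finset.mem_insert, Finset.mem_singleton] at hx
          rcases hx with rfl | rfl <;> simp [Ne.symm hkl])]
    have hcg : ∏ x ∈ Finset.univ \ {k, l},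
        (if x = k then (1:ℝ) else if x = l then 1 else (m:ℝ))
          = ∏ _x ∈ Finset.univ \ {k, l}, (m:ℝ) := by
      apply Finset.prod_congr rfl
      intro x hx
      simp only [Finset.mem_sdiff, Finset.mem_insert, Finset.mem_singleton] at hx
      push_neg at hx
      simp [hx.2.1, hx.2.2]
    rw [hcg, Finset.prod_const]
    congr 1
    rw [Finset.card_sdiff_of_subset (Finset.subset_univ _)]
    simp [Finset.card_pair hkl]
  simp only [step2, Finset.sum_const, Finset.card_univ, Fintype.card_fin, nsmul_eq_mul]
  rw [← pow_succ']
  congr 1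
  omega


/-- The elementary term `𝟙[h(p₁)=h(p₂)] σ(p₁) σ(p₂) y(p₁) y'(p₂)`. -/
def csT {d m : ℕ} (y y' : Fin d → ℝ) (p : Fin d × Fin d)
    (ω : (Fin d → Fin m) × (Fin d → Bool)) : ℝ :=
  (if ω.1 p.1 = ω.1 p.2 then (1:ℝ) else 0) *
    (sketchSign ω.2 p.1 * sketchSign ω.2 p.2) * (y p.1 * y' p.2)


lemma sign_sq {d : ℕ} (s : Fin d → Bool) (k : Fin d) :
    sketchSign s k * sketchSign s k = 1 := by
  unfold sketchSign; split_ifs <;> norm_num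


lemma est_eq {d m : ℕ} (ω : (Fin d → Fin m) × (Fin d → Bool)) (y y' : Fin d → ℝ) :
    sketchEstimator ω y y'
      = ∑ p ∈ (Finset.univ ×ˢ Finset.univ : Finset (Fin d × Fin d)), csT y y' p ω := by
  rw [Finset.sum_product]
  unfold sketchEstimator sketchCoord
  simp only [Fintype.sum_mul_sum]
  rw [Finset.sum_comm]
  apply Finset.sum_congr rfl
  intro k _
  rw [Finset.sum_comm]
  apply Finset.sum_congr rfl
  intro l _
  simp only [ite_mul, mul_ite, zero_mul, mul_zero]
  rw [Finset.sum_ite_eq Finset.univ (ω.1 l)]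
  simp only [Finset.mem_univ, if_true]
  unfold csT
  by_cases hc : ω.1 k = ω.1 l
  · rw [if_pos hc, if_pos hc]; ring
  · rw [if_neg hc, if_neg hc]; ring


lemma est_split {d m : ℕ} (ω : (Fin d → Fin m) × (Fin d → Bool)) (y y' : Fin d → ℝ) :
    sketchEstimator ω y y'
      = (∑ k, y k * y' k) + ∑ p ∈ (Finset.univ : Finset (Fin d)).offDiag, csT y y' p ω := by
  rw [est_eq, ← Finset.diag_union_offDiag,
    Finset.sum_union (Finset.disjoint_diag_offDiag _), Finset.sum_diag]
  congr 1
  apply Finset.sum_congr rfl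
  intro k _
  unfold csT
  simp [sign_sq]


lemma pair_sum {d m : ℕ} (hm : 1 ≤ m) (y y' : Fin d → ℝ) {p q : Fin d × Fin d}
    (hp : p ∈ (Finset.univ : Finset (Fin d)).offDiag)
    (hq : q ∈ (Finset.univ : Finset (Fin d)).offDiag) :
    ∑ ω : (Fin d → Fin m) × (Fin d → Bool), csT y y' p ω * csT y y' q ω
      = if q = p ∨ q = p.swap then
          (y p.1 * y' p.2) * (y q.1 * y' q.2) * ((m:ℝ)^(d-1) * 2^d) else 0 := by
  have hp1 : p.1 ≠ p.2 := (Finset.mem_offDiag.mp hp).2.2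
  have hq1 : q.1 ≠ q.2 := (Finset.mem_offDiag.mp hq).2.2
  rw [Fintype.sum_prod_type]
  have expand : ∀ (h : Fin d → Fin m) (s : Fin d → Bool),
      csT y y' p (h, s) * csT y y' q (h, s)
        = ((if h p.1 = h p.2 then (1:ℝ) else 0) * (if h q.1 = h q.2 then 1 else 0))
          * ((sketchSign s p.1 * sketchSign s p.2
              * (sketchSign s q.1 * sketchSign s q.2))
            * ((y p.1 * y' p.2) * (y q.1 * y' q.2))) := by
    intro h s; unfold csT; ring
  simp only [expand]
  rw [← Finset.sum_mul_sum]
  rw [← Finset.sum_mul]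
  rw [sign4 hp1 hq1]
  have hcond : ((p.1 = q.1 ∧ p.2 = q.2) ∨ (p.1 = q.2 ∧ p.2 = q.1))
      ↔ (q = p ∨ q = p.swap) := by
    constructor
    · rintro (⟨h1, h2⟩ | ⟨h1, h2⟩)
      · exact Or.inl (Prod.ext h1.symm h2.symm)
      · exact Or.inr (Prod.ext h2.symm h1.symm)
    · rintro (rfl | rfl)
      · exact Or.inl ⟨rfl, rfl⟩
      · exact Or.inr ⟨rfl, rfl⟩
  rw [if_congr hcond rfl rfl]
  by_cases hc : q = p ∨ q = p.swap
  · rw [if_pos hc, if_pos hc]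
    have hind : ∀ h : Fin d → Fin m,
        (if h p.1 = h p.2 then (1:ℝ) else 0) * (if h q.1 = h q.2 then 1 else 0)
          = if h p.1 = h p.2 then (1:ℝ) else 0 := by
      intro h
      rcases hc with rfl | rfl
      · split_ifs <;> norm_num
      · simp only [Prod.fst_swap, Prod.snd_swap]
        by_cases hc2 : h p.1 = h p.2
        · rw [if_pos hc2, if_pos hc2.symm]; norm_num
        · rw [if_neg hc2, if_neg (fun h2 => hc2 h2.symm)]; norm_num
    simp only [hind]
    rw [hash_sum hm hp1]
    ring
  · rw [if_neg hc, if_neg hc]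
    ring


lemma sq_sum {d m : ℕ} (hm : 1 ≤ m) (y y' : Fin d → ℝ) :
    ∑ ω : (Fin d → Fin m) × (Fin d → Bool),
        (∑ p ∈ (Finset.univ : Finset (Fin d)).offDiag, csT y y' p ω)^2
      = (∑ p ∈ (Finset.univ : Finset (Fin d)).offDiag,
          (y p.1 * y' p.2) * ((y p.1 * y' p.2) + (y p.2 * y' p.1)))
          * ((m:ℝ)^(d-1) * 2^d) := by
  simp only [sq, Finset.sum_mul_sum]
  rw [Finset.sum_comm]
  rw [Finset.sum_mul]
  apply Finset.sum_congr rfl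
  intro p hp
  rw [Finset.sum_comm]
  have hp1 : p.1 ≠ p.2 := (Finset.mem_offDiag.mp hp).2.2
  have hrow : ∀ q ∈ (Finset.univ : Finset (Fin d)).offDiag,
      ∑ ω : (Fin d → Fin m) × (Fin d → Bool), csT y y' p ω * csT y y' q ω
        = if q = p ∨ q = p.swap then
            (y p.1 * y' p.2) * (y q.1 * y' q.2) * ((m:ℝ)^(d-1) * 2^d) else 0 :=
    fun q hq => pair_sum hm y y' hp hq
  rw [Finset.sum_congr rfl hrow]
  have hsw : p.swap ∈ (Finset.univ : Finset (Fin d)).offDiag :=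
    Finset.mem_offDiag.mpr ⟨Finset.mem_univ _, Finset.mem_univ _, fun h => hp1 h.symm⟩
  have hsub : ({p, p.swap} : Finset (Fin d × Fin d)) ⊆ (Finset.univ : Finset (Fin d)).offDiag := by
    intro x hx
    rcases Finset.mem_insert.mp hx with rfl | hx
    · exact hp
    · rw [Finset.mem_singleton.mp hx]; exact hsw
  have hne : p ≠ p.swap := by
    intro h
    exact hp1 (congrArg Prod.fst h)
  rw [← Finset.sum_subset hsub (by
    intro q _ hq2
    rw [if_neg]
    intro hc
    apply hq2
    rcases hc with rfl | rfl
    · exact Finset.mem_insert_self _ _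
    · exact Finset.mem_insert_of_mem (Finset.mem_singleton_self _))]
  rw [Finset.sum_pair hne]
  rw [if_pos (Or.inl rfl), if_pos (Or.inr rfl)]
  simp only [Prod.fst_swap, Prod.snd_swap]
  ring


/-- the count-sketch inner-product estimator satisfies the variance bound
`Var(⟨Sy, Sy'⟩) ≤ (1/m) (‖y‖₂²‖y'‖₂² + ⟨y, y'⟩²)`. -/
theorem countSketch_variance (d m : ℕ) (hd : 1 ≤ d) (hm : 1 ≤ m)
    (y y' : Fin d → ℝ) :
    sketchExp (m := m) (fun ω => (sketchEstimator ω y y') ^ 2)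
        - (sketchExp (m := m) (fun ω => sketchEstimator ω y y')) ^ 2
      ≤ (1 / (m : ℝ)) *
          ((∑ k, (y k) ^ 2) * (∑ k, (y' k) ^ 2) + (∑ k, y k * y' k) ^ 2) := by
  classical
  set c : ℝ := ∑ k, y k * y' k with hc
  set W : ((Fin d → Fin m) × (Fin d → Bool)) → ℝ :=
    fun ω => ∑ p ∈ (Finset.univ : Finset (Fin d)).offDiag, csT y y' p ω with hW
  set A : ℝ := ∑ ω : (Fin d → Fin m) × (Fin d → Bool), W ω with hA
  set B : ℝ := ∑ ω : (Fin d → Fin m) × (Fin d → Bool), (W ω)^2 with hB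
  set N : ℝ := (Fintype.card ((Fin d → Fin m) × (Fin d → Bool)) : ℝ) with hN
  have hexp : ∀ f : ((Fin d → Fin m) × (Fin d → Bool)) → ℝ,
      sketchExp f = (∑ ω, f ω) / N := fun f => rfl
  have hNval : N = (m:ℝ)^d * 2^d := by
    rw [hN]
    simp [Fintype.card_fun]
  have hm0 : (0:ℝ) < (m:ℝ) := by exact_mod_cast hm
  have hNpos : (0:ℝ) < N := by rw [hNval]; positivity
  have hNne : N ≠ 0 := ne_of_gt hNpos
  have hZ : ∀ ω : (Fin d → Fin m) × (Fin d → Bool),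
      sketchEstimator ω y y' = c + W ω := fun ω => est_split ω y y'
  have hsumZ : ∑ ω : (Fin d → Fin m) × (Fin d → Bool), sketchEstimator ω y y'
      = N * c + A := by
    simp only [hZ, Finset.sum_add_distrib, Finset.sum_const, Finset.card_univ,
      nsmul_eq_mul, hA, hN]
  have hsumZ2 : ∑ ω : (Fin d → Fin m) × (Fin d → Bool), (sketchEstimator ω y y')^2
      = N * c^2 + 2*c*A + B := by
    have hpt : ∀ ω : (Fin d → Fin m) × (Fin d → Bool),
        (sketchEstimator ω y y')^2 = c^2 + (2*c*W ω + W ω^2) := by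
      intro ω; rw [hZ ω]; ring
    simp only [hpt, Finset.sum_add_distrib, Finset.sum_const, Finset.card_univ,
      nsmul_eq_mul, ← Finset.mul_sum, hA, hB, hN]
    ring
  simp only [hexp]
  rw [hsumZ2, hsumZ]
  have key : (N * c^2 + 2*c*A + B)/N - ((N*c + A)/N)^2 = B/N - (A/N)^2 := by
    field_simp
    ring
  rw [key]
  have hstep1 : B/N - (A/N)^2 ≤ B/N := by
    nlinarith [sq_nonneg (A/N)]
  set SS : ℝ := ∑ p ∈ (Finset.univ : Finset (Fin d)).offDiag,
      (y p.1 * y' p.2) * ((y p.1 * y' p.2) + (y p.2 * y' p.1)) with hSS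
  have hBval : B = SS * ((m:ℝ)^(d-1) * 2^d) := sq_sum hm y y'
  have hmd : (m:ℝ)^d = (m:ℝ)^(d-1) * m := by
    rw [← pow_succ]
    congr 1
    omega
  have hBN : B / N = (1/(m:ℝ)) * SS := by
    rw [hBval, hNval, hmd]
    have h2 : (2:ℝ)^d ≠ 0 := by positivity
    have h3 : (m:ℝ)^(d-1) ≠ 0 := by positivity
    field_simp
  rw [hBN] at hstep1 ⊢
  refine le_trans hstep1 ?_
  have hsplit : SS = (∑ p ∈ (Finset.univ : Finset (Fin d)).offDiag, (y p.1 * y' p.2)^2)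
      + ∑ p ∈ (Finset.univ : Finset (Fin d)).offDiag,
          ((y p.1 * y' p.1) * (y p.2 * y' p.2)) := by
    rw [hSS, ← Finset.sum_add_distrib]
    apply Finset.sum_congr rfl
    intro p _
    ring
  have hsubP : (Finset.univ : Finset (Fin d)).offDiag
      ⊆ (Finset.univ ×ˢ Finset.univ : Finset (Fin d × Fin d)) := by
    intro x hx
    exact Finset.mem_product.mpr ⟨Finset.mem_univ _, Finset.mem_univ _⟩
  have hS1 : ∑ p ∈ (Finset.univ : Finset (Fin d)).offDiag, (y p.1 * y' p.2)^2
      ≤ (∑ k, (y k)^2) * (∑ k, (y' k)^2) := by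
    calc ∑ p ∈ (Finset.univ : Finset (Fin d)).offDiag, (y p.1 * y' p.2)^2
        ≤ ∑ p ∈ (Finset.univ ×ˢ Finset.univ : Finset (Fin d × Fin d)), (y p.1 * y' p.2)^2 :=
          Finset.sum_le_sum_of_subset_of_nonneg hsubP (fun p _ _ => sq_nonneg _)
      _ = (∑ k, (y k)^2) * (∑ k, (y' k)^2) := by
          rw [Finset.sum_product, Finset.sum_mul_sum]
          apply Finset.sum_congr rfl; intro k _
          apply Finset.sum_congr rfl; intro l _
          ring
  have hS2 : ∑ p ∈ (Finset.univ : Finset (Fin d)).offDiag,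
      ((y p.1 * y' p.1) * (y p.2 * y' p.2)) ≤ (∑ k, y k * y' k)^2 := by
    have hprod : ∑ p ∈ (Finset.univ ×ˢ Finset.univ : Finset (Fin d × Fin d)),
        ((y p.1 * y' p.1) * (y p.2 * y' p.2)) = (∑ k, y k * y' k)^2 := by
      rw [Finset.sum_product, sq, Finset.sum_mul_sum]
    have hdec : ∑ p ∈ (Finset.univ ×ˢ Finset.univ : Finset (Fin d × Fin d)),
        ((y p.1 * y' p.1) * (y p.2 * y' p.2))
        = (∑ k, (y k * y' k)^2)
          + ∑ p ∈ (Finset.univ : Finset (Fin d)).offDiag,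
              ((y p.1 * y' p.1) * (y p.2 * y' p.2)) := by
      rw [← Finset.diag_union_offDiag,
        Finset.sum_union (Finset.disjoint_diag_offDiag _), Finset.sum_diag]
      congr 1
      apply Finset.sum_congr rfl
      intro k _
      ring
    have hnn : (0:ℝ) ≤ ∑ k, (y k * y' k)^2 :=
      Finset.sum_nonneg (fun k _ => sq_nonneg _)
    linarith [hprod ▸ hdec]
  have hadd := add_le_add hS1 hS2
  have h1m : (0:ℝ) ≤ 1/(m:ℝ) := by positivity
  calc (1/(m:ℝ)) * SS
      = (1/(m:ℝ)) * ((∑ p ∈ (Finset.univ : Finset (Fin d)).offDiag, (y p.1 * y' p.2)^2)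
        + ∑ p ∈ (Finset.univ : Finset (Fin d)).offDiag,
            ((y p.1 * y' p.1) * (y p.2 * y' p.2))) := by rw [← hsplit]
    _ ≤ (1 / (m : ℝ)) * ((∑ k, (y k) ^ 2) * (∑ k, (y' k) ^ 2) + (∑ k, y k * y' k) ^ 2) :=
      mul_le_mul_of_nonneg_left hadd h1m
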